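/- Let n ≥ 3 be odd, ω = ⌊2^(n/2)⌋ with ω ≡ 0 (mod 4), and q : 𝔽₂ⁿ → 𝔽₂ balanced. Then no f : 𝔽₂ⁿ → 𝔽₂ with wt(f) even is 3-almost q-bent. -/

import Mathlib

open Finset

/-- The weight of a Boolean function: the size of its support. -/
def wt {n : ℕ} (f : (Fin n → ZMod 2) → ZMod 2) : ℕ :=
  (Finset.univ.filter (fun a : Fin n → ZMod 2 => f a = 1)).card

/-- `q` is balanced if its weight is `2^(n-1)`. -/
def IsBalanced {n : ℕ} (q : (Fin n → ZMod 2) → ZMod 2) : Prop :=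
  wt q = 2 ^ (n - 1)

/-- `q` is affine if `q(x) = v·x + c` for some `v` and `c`. -/
def IsAffine {n : ℕ} (q : (Fin n → ZMod 2) → ZMod 2) : Prop :=
  ∃ (v : Fin n → ZMod 2) (c : ZMod 2), ∀ x, q x = (∑ i, v i * x i) + c

/-- The `q`-transform coefficient `W_q(f)(A)`, with `W_q(f)(0)` defined as the imbalance. -/
def Wq {n : ℕ} (q f : (Fin n → ZMod 2) → ZMod 2) (A : Matrix (Fin n) (Fin n) (ZMod 2)) : ℤ :=
  if A = 0 then ∑ a : Fin n → ZMod 2, (-1 : ℤ) ^ (f a).val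
  else ∑ a : Fin n → ZMod 2, (-1 : ℤ) ^ (f a + q (Matrix.vecMul a A)).val

/-- `f` is `q`-bent: `|W_q(f)(A)| = 2^(n/2)` for all `A ∈ GL_n(𝔽₂) ∪ {0}`. -/
def QBent {n : ℕ} (q f : (Fin n → ZMod 2) → ZMod 2) : Prop :=
  ∀ A : Matrix (Fin n) (Fin n) (ZMod 2), (IsUnit A ∨ A = 0) → |Wq q f A| = 2 ^ (n / 2)

namespace Stmt19

open Matrix
variable {n : ℕ}

lemma sign_add (a b : ZMod 2) :
    (-1:ℤ)^(a+b).val = (-1:ℤ)^a.val * (-1:ℤ)^b.val := by revert a b; decide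

lemma sign_sq (a : ZMod 2) : (-1:ℤ)^a.val * (-1:ℤ)^a.val = 1 := by revert a; decide

lemma card_V : Fintype.card (Fin n → ZMod 2) = 2^n := by
  rw [Fintype.card_fun]; simp

lemma wt_le (h : (Fin n → ZMod 2) → ZMod 2) : wt h ≤ 2^n := by
  rw [← card_V (n := n), ← Finset.card_univ]; exact Finset.card_filter_le _ _

lemma sum_sign (h : (Fin n → ZMod 2) → ZMod 2) :
    ∑ a, (-1:ℤ)^(h a).val = (2^n : ℤ) - 2 * wt h := by
  rw [← Finset.sum_filter_add_sum_filter_not Finset.univ (fun a => h a = 1)]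
  have h1 : ∀ a ∈ univ.filter (fun a => h a = 1), (-1:ℤ)^(h a).val = -1 := by
    intro a ha
    rw [mem_filter] at ha
    rw [ha.2]; decide
  have hc : ∀ c : ZMod 2, ¬ c = 1 → c = 0 := by decide
  have h0 : ∀ a ∈ univ.filter (fun a => ¬ h a = 1), (-1:ℤ)^(h a).val = 1 := by
    intro a ha
    rw [mem_filter] at ha
    rw [hc _ ha.2]; decide
  rw [Finset.sum_congr rfl h1, Finset.sum_congr rfl h0]
  rw [Finset.sum_const, Finset.sum_const, Finset.filter_not, Finset.card_sdiff_of_subset (filter_subset _ _)]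
  have hle := wt_le h
  have hcu : (univ : Finset (Fin n → ZMod 2)).card = 2^n := by
    rw [Finset.card_univ, card_V]
  rw [hcu]
  show ((wt h) : ℤ) • (-1:ℤ) + ((2^n - wt h : ℕ) : ℤ) • (1:ℤ) = _
  simp only [smul_eq_mul]
  push_cast [Nat.cast_sub hle]
  ring

lemma wt_eq_sum (h : (Fin n → ZMod 2) → ZMod 2) : wt h = ∑ a, (h a).val := by
  rw [wt, Finset.card_filter]
  refine Finset.sum_congr rfl (fun a _ => ?_)
  have : ∀ c : ZMod 2, (if c = 1 then 1 else 0) = c.val := by decide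
  exact this (h a)

lemma even_wt_add (f g : (Fin n → ZMod 2) → ZMod 2) (hf : Even (wt f)) (hg : Even (wt g)) :
    Even (wt (fun a => f a + g a)) := by
  have key : ∀ h : (Fin n → ZMod 2) → ZMod 2, ((wt h : ZMod 2)) = ∑ a, h a := by
    intro h
    rw [wt_eq_sum]
    push_cast
    refine Finset.sum_congr rfl (fun a _ => ?_)
    have : ∀ c : ZMod 2, ((c.val : ℕ) : ZMod 2) = c := by decide
    exact this _
  have hcast : ∀ m : ℕ, Even m ↔ ((m : ZMod 2) = 0) := by
    intro m
    have h2 : Even m ↔ 2 ∣ m := ⟨fun ⟨k,hk⟩ => ⟨k, by omega⟩, fun ⟨k,hk⟩ => ⟨k, by omega⟩⟩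
    rw [h2, ← ZMod.natCast_eq_zero_iff m 2]
  rw [hcast]
  rw [key, Finset.sum_add_distrib, ← key, ← key]
  rw [(hcast _).mp hf, (hcast _).mp hg, add_zero]


open Matrix
variable {n : ℕ}

lemma unit_ne_zero (hn : 1 ≤ n) {A : Matrix (Fin n) (Fin n) (ZMod 2)} (hA : IsUnit A) :
    A ≠ 0 := by
  rintro rfl
  rw [Matrix.isUnit_iff_isUnit_det] at hA
  rw [haveI : Nonempty (Fin n) := ⟨⟨0, by omega⟩⟩; Matrix.det_zero] at hA
  simp at hA

lemma Wq_zero (q f : (Fin n → ZMod 2) → ZMod 2) : Wq q f 0 = (2^n:ℤ) - 2 * wt f := by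
  rw [Wq, if_pos rfl, sum_sign]

lemma Wq_unit (hn : 1 ≤ n) (q f : (Fin n → ZMod 2) → ZMod 2)
    {A : Matrix (Fin n) (Fin n) (ZMod 2)} (hA : IsUnit A) :
    Wq q f A = (2^n:ℤ) - 2 * wt (fun a => f a + q (vecMul a A)) := by
  rw [Wq, if_neg (unit_ne_zero hn hA), sum_sign]

lemma wt_comp (h : (Fin n → ZMod 2) → ZMod 2) {A : Matrix (Fin n) (Fin n) (ZMod 2)}
    (hA : IsUnit A) : wt (fun a => h (vecMul a A)) = wt h := by
  have hd : IsUnit A.det := (Matrix.isUnit_iff_isUnit_det A).mp hA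
  rw [wt, wt]
  refine Finset.card_bij' (fun a _ => vecMul a A) (fun b _ => vecMul b A⁻¹) ?_ ?_ ?_ ?_
  · intro a ha; rw [mem_filter] at ha ⊢; exact ⟨mem_univ _, ha.2⟩
  · intro b hb; rw [mem_filter] at hb ⊢
    refine ⟨mem_univ _, ?_⟩
    show h (vecMul (vecMul b A⁻¹) A) = 1
    rw [Matrix.vecMul_vecMul, Matrix.nonsing_inv_mul _ hd, Matrix.vecMul_one]
    exact hb.2
  · intro a _
    show vecMul (vecMul a A) A⁻¹ = a
    rw [Matrix.vecMul_vecMul, Matrix.mul_nonsing_inv _ hd, Matrix.vecMul_one]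
  · intro b _
    show vecMul (vecMul b A⁻¹) A = b
    rw [Matrix.vecMul_vecMul, Matrix.nonsing_inv_mul _ hd, Matrix.vecMul_one]

lemma dvd_four (hn : 3 ≤ n) (q f : (Fin n → ZMod 2) → ZMod 2) (hq : IsBalanced q)
    (hf : Even (wt f)) (A : Matrix (Fin n) (Fin n) (ZMod 2)) (hA : IsUnit A ∨ A = 0) :
    (4:ℤ) ∣ Wq q f A := by
  obtain ⟨m, hm⟩ := Nat.exists_eq_add_of_le hn
  have h4 : (4:ℤ) ∣ (2^n:ℤ) := by
    subst hm; exact ⟨2^(m+1), by push_cast [pow_add]; ring⟩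
  rcases hA with hA | rfl
  · rw [Wq_unit (by omega) q f hA]
    have hev : Even (wt (fun a => f a + q (vecMul a A))) := by
      refine even_wt_add f (fun a => q (vecMul a A)) hf ?_
      rw [wt_comp q hA, hq]
      exact ⟨2^(n-2), by rw [← two_mul, ← pow_succ']; congr 1; omega⟩
    obtain ⟨k, hk⟩ := hev
    refine dvd_sub h4 ⟨k, ?_⟩
    rw [hk]; push_cast; ring
  · rw [Wq_zero]
    obtain ⟨k, hk⟩ := hf
    refine dvd_sub h4 ⟨k, ?_⟩
    rw [hk]; push_cast; ring

lemma pin (s : ℝ) (ω W : ℤ) (hω : ω = ⌊s⌋) (hω4 : ω % 4 = 0) (h4 : (4:ℤ) ∣ W)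
    (h3 : |(|W| : ℝ) - s| ≤ 3) : |W| = ω := by
  have habs : (4:ℤ) ∣ |W| := (dvd_abs 4 W).mpr h4
  have hfl : (ω : ℝ) ≤ s := hω ▸ Int.floor_le s
  have hfu : s < (ω : ℝ) + 1 := by rw [hω]; exact_mod_cast Int.lt_floor_add_one s
  rw [abs_le] at h3
  have hub : (|W| : ℝ) < (ω:ℝ) + 4 := by linarith
  have hlb : ((ω:ℝ)) - 3 ≤ (|W| : ℝ) := by linarith
  have h5 : ((|W|:ℤ):ℝ) < ((ω + 4 : ℤ):ℝ) := by push_cast; push_cast at hub; linarith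
  have h6 : ((ω - 3 : ℤ):ℝ) ≤ ((|W|:ℤ):ℝ) := by push_cast; push_cast at hlb; linarith
  have hub' : |W| < ω + 4 := by exact_mod_cast h5
  have hlb' : ω - 3 ≤ |W| := by exact_mod_cast h6
  omega

open Matrix
variable {n : ℕ}

lemma pair_li {u v : Fin n → ZMod 2} (hu : u ≠ 0) (hv : v ≠ 0) (huv : u ≠ v) :
    LinearIndependent (ZMod 2) (Subtype.val : ({u, v} : Set (Fin n → ZMod 2)) → (Fin n → ZMod 2)) := by
  show LinearIndepOn (ZMod 2) id ({u, v} : Set (Fin n → ZMod 2))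
  rw [show ({u, v} : Set (Fin n → ZMod 2)) = insert u {v} from rfl]
  rw [linearIndepOn_id_insert (by simpa using huv)]
  refine ⟨LinearIndepOn.singleton hv, ?_⟩
  intro hmem
  rw [Submodule.mem_span_singleton] at hmem
  obtain ⟨a, ha⟩ := hmem
  rcases (by decide : ∀ a : ZMod 2, a = 0 ∨ a = 1) a with h | h <;> subst h
  · rw [zero_smul] at ha; exact hu ha.symm
  · rw [one_smul] at ha; exact huv ha.symm

/-- There is an invertible matrix whose rows `z0`, `z1` are `u`, `v`. -/
lemma exists_unit_std (hn : 3 ≤ n) (u v : Fin n → ZMod 2)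
    (hu : u ≠ 0) (hv : v ≠ 0) (huv : u ≠ v) :
    ∃ B : Matrix (Fin n) (Fin n) (ZMod 2), IsUnit B ∧
      vecMul (Pi.single (⟨0, by omega⟩ : Fin n) 1) B = u ∧
      vecMul (Pi.single (⟨1, by omega⟩ : Fin n) 1) B = v := by
  set z0 : Fin n := ⟨0, by omega⟩
  set z1 : Fin n := ⟨1, by omega⟩
  have hz01 : z0 ≠ z1 := by simp [z0, z1, Fin.ext_iff]
  have hs : LinearIndepOn (ZMod 2) id ({u, v} : Set (Fin n → ZMod 2)) := pair_li hu hv huv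
  set t : Set (Fin n → ZMod 2) := hs.extend (Set.subset_univ _) with ht
  haveI : Fintype ↥t := Fintype.ofFinite _
  have hcard : Fintype.card ↥t = n := by
    have := Module.finrank_eq_card_basis (Module.Basis.extend hs)
    rw [← this, Module.finrank_pi (ZMod 2)]
    simp
  have hut : u ∈ t := hs.subset_extend _ (by simp)
  have hvt : v ∈ t := hs.subset_extend _ (by simp)
  set iu : ↥t := ⟨u, hut⟩
  set iv : ↥t := ⟨v, hvt⟩
  have hiuv : iu ≠ iv := fun h => huv (congrArg Subtype.val h)
  obtain σ₀ : Fin n ≃ ↥t := Fintype.equivOfCardEq (by rw [Fintype.card_fin, hcard])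
  set σ₁ : Fin n ≃ ↥t := (Equiv.swap z0 (σ₀.symm iu)).trans σ₀ with hσ₁
  have hσ₁0 : σ₁ z0 = iu := by simp [hσ₁, Equiv.swap_apply_left]
  set b : Fin n := σ₁.symm iv with hb
  have hbne : b ≠ z0 := by
    intro h
    apply hiuv
    rw [← hσ₁0, ← h, hb, Equiv.apply_symm_apply]
  set σ₂ : Fin n ≃ ↥t := (Equiv.swap z1 b).trans σ₁ with hσ₂
  have hσ₂1 : σ₂ z1 = iv := by simp [hσ₂, Equiv.swap_apply_left, hb]
  have hσ₂0 : σ₂ z0 = iu := by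
    rw [hσ₂]
    simp only [Equiv.trans_apply]
    rw [Equiv.swap_apply_of_ne_of_ne hz01 (Ne.symm hbne)]
    exact hσ₁0
  set bas : Module.Basis (Fin n) (ZMod 2) (Fin n → ZMod 2) := (Module.Basis.extend hs).reindex σ₂.symm with hbas
  have hbas0 : bas z0 = u := by
    rw [hbas, Module.Basis.reindex_apply, Equiv.symm_symm, hσ₂0, Module.Basis.extend_apply_self]
  have hbas1 : bas z1 = v := by
    rw [hbas, Module.Basis.reindex_apply, Equiv.symm_symm, hσ₂1, Module.Basis.extend_apply_self]
  set B : Matrix (Fin n) (Fin n) (ZMod 2) := Matrix.of (fun i j => bas i j) with hB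
  have hvec : ∀ k : Fin n, vecMul (Pi.single k 1) B = B k := by
    intro k; ext j
    simp [Matrix.vecMul, dotProduct, Pi.single_apply]
  have hBt : B = ((Pi.basisFun (ZMod 2) (Fin n)).toMatrix ⇑bas)ᵀ := by
    ext i j
    simp [hB, Module.Basis.toMatrix_apply, Pi.basisFun_repr]
  have hunit : IsUnit B := by
    haveI := Module.Basis.invertibleToMatrix (Pi.basisFun (ZMod 2) (Fin n)) bas
    rw [Matrix.isUnit_iff_isUnit_det, hBt, Matrix.det_transpose,
      ← Matrix.isUnit_iff_isUnit_det]
    exact isUnit_of_invertible _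
  exact ⟨B, hunit, by rw [hvec, hB]; ext j; exact congrFun hbas0 j,
    by rw [hvec, hB]; ext j; exact congrFun hbas1 j⟩

lemma exists_unit_pair (hn : 3 ≤ n) {x y u v : Fin n → ZMod 2}
    (hx : x ≠ 0) (hy : y ≠ 0) (hxy : x ≠ y)
    (hu : u ≠ 0) (hv : v ≠ 0) (huv : u ≠ v) :
    ∃ B : Matrix (Fin n) (Fin n) (ZMod 2), IsUnit B ∧ vecMul x B = u ∧ vecMul y B = v := by
  obtain ⟨B₁, hB₁, e1, e2⟩ := exists_unit_std hn x y hx hy hxy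
  obtain ⟨B₂, hB₂, f1, f2⟩ := exists_unit_std hn u v hu hv huv
  have hd₁ : IsUnit B₁.det := (Matrix.isUnit_iff_isUnit_det B₁).mp hB₁
  have hinv : IsUnit B₁⁻¹ := Matrix.isUnit_nonsing_inv_iff.mpr hB₁
  have gx : vecMul x B₁⁻¹ = Pi.single (⟨0, by omega⟩ : Fin n) 1 := by
    rw [← e1, Matrix.vecMul_vecMul, Matrix.mul_nonsing_inv _ hd₁, Matrix.vecMul_one]
  have gy : vecMul y B₁⁻¹ = Pi.single (⟨1, by omega⟩ : Fin n) 1 := by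
    rw [← e2, Matrix.vecMul_vecMul, Matrix.mul_nonsing_inv _ hd₁, Matrix.vecMul_one]
  refine ⟨B₁⁻¹ * B₂, hinv.mul hB₂, ?_, ?_⟩
  · rw [← Matrix.vecMul_vecMul, gx, f1]
  · rw [← Matrix.vecMul_vecMul, gy, f2]

lemma exists_third (hn : 3 ≤ n) (x : Fin n → ZMod 2) :
    ∃ y : Fin n → ZMod 2, y ≠ 0 ∧ y ≠ x := by
  by_contra h
  push_neg at h
  have hsub : (univ : Finset (Fin n → ZMod 2)) ⊆ {0, x} := by
    intro y _
    rcases eq_or_ne y 0 with h0 | h0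
    · simp [h0]
    · simp [h y h0]
  have hle := Finset.card_le_card hsub
  have h1 : (univ : Finset (Fin n → ZMod 2)).card = 2^n := by
    rw [Finset.card_univ, Fintype.card_fun]; simp
  have h2 : ({0, x} : Finset (Fin n → ZMod 2)).card ≤ 2 := Finset.card_insert_le _ _ |>.trans (by simp)
  have h3 : (8:ℕ) ≤ 2^n := by calc (8:ℕ) = 2^3 := rfl
                                   _ ≤ 2^n := Nat.pow_le_pow_right (by omega) hn
  omega

lemma exists_unit_single (hn : 3 ≤ n) {x u : Fin n → ZMod 2} (hx : x ≠ 0) (hu : u ≠ 0) :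
    ∃ B : Matrix (Fin n) (Fin n) (ZMod 2), IsUnit B ∧ vecMul x B = u := by
  obtain ⟨y, hy0, hyx⟩ := exists_third hn x
  obtain ⟨v, hv0, hvu⟩ := exists_third hn u
  obtain ⟨B, hB, h1, _⟩ := exists_unit_pair hn hx hy0 (Ne.symm hyx) hu hv0 (Ne.symm hvu)
  exact ⟨B, hB, h1⟩


open Matrix
variable {n : ℕ}

lemma fib_sum {α β : Type*} [DecidableEq α] [DecidableEq β] (S : Finset α) (T : Finset β)
    (φ : α → β) (hmaps : ∀ a ∈ S, φ a ∈ T)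
    (hfib : ∀ b₁ ∈ T, ∀ b₂ ∈ T,
      (S.filter (fun a => φ a = b₁)).card = (S.filter (fun a => φ a = b₂)).card)
    (g : β → ℤ) :
    (T.card : ℤ) * ∑ a ∈ S, g (φ a) = (S.card : ℤ) * ∑ b ∈ T, g b := by
  rcases T.eq_empty_or_nonempty with rfl | ⟨b₀, hb₀⟩
  · have hS : S = ∅ := eq_empty_of_forall_notMem (fun a ha => by simpa using hmaps a ha)
    simp [hS]
  · set c := (S.filter (fun a => φ a = b₀)).card with hc
    have hsum : ∑ a ∈ S, g (φ a)
        = ∑ b ∈ T, ((S.filter (fun a => φ a = b)).card : ℤ) * g b := by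
      rw [← Finset.sum_fiberwise_of_maps_to hmaps (fun a => g (φ a))]
      refine Finset.sum_congr rfl (fun b hb => ?_)
      rw [Finset.sum_congr rfl (fun a ha => by rw [(Finset.mem_filter.mp ha).2]),
        Finset.sum_const, nsmul_eq_mul]
    have hgen : ∑ a ∈ S, g (φ a) = (c:ℤ) * ∑ b ∈ T, g b := by
      rw [hsum, Finset.mul_sum]
      exact Finset.sum_congr rfl (fun b hb => by rw [hfib b hb b₀ hb₀])
    have hcardS : S.card = c * T.card := by
      rw [Finset.card_eq_sum_card_fiberwise hmaps]
      rw [Finset.sum_congr rfl (fun b hb => hfib b hb b₀ hb₀), Finset.sum_const, smul_eq_mul]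
      ring
    rw [hgen, show ((S.card : ℤ)) = (c:ℤ) * T.card by exact_mod_cast hcardS]; ring

/-- The invertible matrices as a finset. -/
def G (n : ℕ) : Finset (Matrix (Fin n) (Fin n) (ZMod 2)) :=
  univ.filter (fun A => A.det ≠ 0)

lemma mem_G {A : Matrix (Fin n) (Fin n) (ZMod 2)} : A ∈ G n ↔ IsUnit A := by
  rw [G, mem_filter, Matrix.isUnit_iff_isUnit_det, isUnit_iff_ne_zero]
  simp

lemma G_card_pos : 0 < (G n).card := by
  refine Finset.card_pos.mpr ⟨1, mem_G.mpr isUnit_one⟩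

lemma card_erase0 : ((univ : Finset (Fin n → ZMod 2)).erase 0).card = 2^n - 1 := by
  rw [Finset.card_erase_of_mem (mem_univ _), Finset.card_univ, card_V]

lemma vecMul_G_ne {A : Matrix (Fin n) (Fin n) (ZMod 2)} (hA : IsUnit A)
    {y : Fin n → ZMod 2} (hy : y ≠ 0) : vecMul y A ≠ 0 := by
  intro h
  apply hy
  have hd : IsUnit A.det := (Matrix.isUnit_iff_isUnit_det A).mp hA
  have : vecMul (vecMul y A) A⁻¹ = y := by
    rw [Matrix.vecMul_vecMul, Matrix.mul_nonsing_inv _ hd, Matrix.vecMul_one]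
  rw [← this, h, Matrix.zero_vecMul]

lemma vecMul_G_inj {A : Matrix (Fin n) (Fin n) (ZMod 2)} (hA : IsUnit A)
    {x y : Fin n → ZMod 2} (h : vecMul x A = vecMul y A) : x = y := by
  have hd : IsUnit A.det := (Matrix.isUnit_iff_isUnit_det A).mp hA
  have hx : vecMul (vecMul x A) A⁻¹ = x := by
    rw [Matrix.vecMul_vecMul, Matrix.mul_nonsing_inv _ hd, Matrix.vecMul_one]
  have hyy : vecMul (vecMul y A) A⁻¹ = y := by
    rw [Matrix.vecMul_vecMul, Matrix.mul_nonsing_inv _ hd, Matrix.vecMul_one]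
  rw [← hx, ← hyy, h]

lemma L1 (hn : 3 ≤ n) {y : Fin n → ZMod 2} (hy : y ≠ 0) (g : (Fin n → ZMod 2) → ℤ) :
    (((univ : Finset (Fin n → ZMod 2)).erase 0).card : ℤ) * ∑ A ∈ G n, g (vecMul y A)
      = ((G n).card : ℤ) * ∑ u ∈ (univ : Finset (Fin n → ZMod 2)).erase 0, g u := by
  refine fib_sum (G n) _ (fun A => vecMul y A) ?_ ?_ g
  · intro A hA
    exact Finset.mem_erase.mpr ⟨vecMul_G_ne (mem_G.mp hA) hy, mem_univ _⟩
  · intro u₁ h₁ u₂ h₂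
    obtain ⟨B, hB, hBe⟩ := exists_unit_single hn (Finset.mem_erase.mp h₁).1 (Finset.mem_erase.mp h₂).1
    have hd : IsUnit B.det := (Matrix.isUnit_iff_isUnit_det B).mp hB
    have hBinv : vecMul u₂ B⁻¹ = u₁ := by
      rw [← hBe, Matrix.vecMul_vecMul, Matrix.mul_nonsing_inv _ hd, Matrix.vecMul_one]
    refine Finset.card_bij' (fun A _ => A * B) (fun A _ => A * B⁻¹) ?_ ?_ ?_ ?_
    · intro A hA
      rw [mem_filter] at hA ⊢
      refine ⟨mem_G.mpr ((mem_G.mp hA.1).mul hB), ?_⟩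
      show vecMul y (A * B) = u₂
      have h2 : vecMul y A = u₁ := hA.2
      rw [← Matrix.vecMul_vecMul, h2, hBe]
    · intro A hA
      rw [mem_filter] at hA ⊢
      refine ⟨mem_G.mpr ((mem_G.mp hA.1).mul (Matrix.isUnit_nonsing_inv_iff.mpr hB)), ?_⟩
      show vecMul y (A * B⁻¹) = u₁
      have h2 : vecMul y A = u₂ := hA.2
      rw [← Matrix.vecMul_vecMul, h2, hBinv]
    · intro A _
      show A * B * B⁻¹ = A
      rw [mul_assoc, Matrix.mul_nonsing_inv _ hd, mul_one]
    · intro A _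
      show A * B⁻¹ * B = A
      rw [mul_assoc, Matrix.nonsing_inv_mul _ hd, mul_one]

/-- Pairs of distinct nonzero vectors. -/
def P (n : ℕ) : Finset ((Fin n → ZMod 2) × (Fin n → ZMod 2)) :=
  (((univ : Finset (Fin n → ZMod 2)).erase 0) ×ˢ ((univ : Finset (Fin n → ZMod 2)).erase 0)).filter
    (fun p => ¬ p.1 = p.2)

lemma mem_P {p : (Fin n → ZMod 2) × (Fin n → ZMod 2)} :
    p ∈ P n ↔ p.1 ≠ 0 ∧ p.2 ≠ 0 ∧ p.1 ≠ p.2 := by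
  rw [P, mem_filter, Finset.mem_product, Finset.mem_erase, Finset.mem_erase]
  simp only [Finset.mem_univ, and_true]
  tauto

lemma L2 (hn : 3 ≤ n) {x y : Fin n → ZMod 2} (hx : x ≠ 0) (hy : y ≠ 0) (hxy : x ≠ y)
    (g : (Fin n → ZMod 2) × (Fin n → ZMod 2) → ℤ) :
    ((P n).card : ℤ) * ∑ A ∈ G n, g (vecMul x A, vecMul y A)
      = ((G n).card : ℤ) * ∑ p ∈ P n, g p := by
  refine fib_sum (G n) _ (fun A => (vecMul x A, vecMul y A)) ?_ ?_ g
  · intro A hA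
    have hu := mem_G.mp hA
    exact mem_P.mpr ⟨vecMul_G_ne hu hx, vecMul_G_ne hu hy,
      fun h => hxy (vecMul_G_inj hu h)⟩
  · intro p₁ h₁ p₂ h₂
    obtain ⟨h1a, h1b, h1c⟩ := mem_P.mp h₁
    obtain ⟨h2a, h2b, h2c⟩ := mem_P.mp h₂
    obtain ⟨B, hB, hBe1, hBe2⟩ := exists_unit_pair hn h1a h1b h1c h2a h2b h2c
    have hd : IsUnit B.det := (Matrix.isUnit_iff_isUnit_det B).mp hB
    have hBi1 : vecMul p₂.1 B⁻¹ = p₁.1 := by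
      rw [← hBe1, Matrix.vecMul_vecMul, Matrix.mul_nonsing_inv _ hd, Matrix.vecMul_one]
    have hBi2 : vecMul p₂.2 B⁻¹ = p₁.2 := by
      rw [← hBe2, Matrix.vecMul_vecMul, Matrix.mul_nonsing_inv _ hd, Matrix.vecMul_one]
    refine Finset.card_bij' (fun A _ => A * B) (fun A _ => A * B⁻¹) ?_ ?_ ?_ ?_
    · intro A hA
      rw [mem_filter] at hA ⊢
      have h2 := hA.2
      rw [Prod.mk.injEq] at h2
      refine ⟨mem_G.mpr ((mem_G.mp hA.1).mul hB), ?_⟩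
      show (vecMul x (A * B), vecMul y (A * B)) = p₂
      rw [← Matrix.vecMul_vecMul, ← Matrix.vecMul_vecMul, h2.1, h2.2, hBe1, hBe2]
    · intro A hA
      rw [mem_filter] at hA ⊢
      have h2 := hA.2
      rw [Prod.mk.injEq] at h2
      refine ⟨mem_G.mpr ((mem_G.mp hA.1).mul (Matrix.isUnit_nonsing_inv_iff.mpr hB)), ?_⟩
      show (vecMul x (A * B⁻¹), vecMul y (A * B⁻¹)) = p₁
      rw [← Matrix.vecMul_vecMul, ← Matrix.vecMul_vecMul, h2.1, h2.2, hBi1, hBi2]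
    · intro A _
      show A * B * B⁻¹ = A
      rw [mul_assoc, Matrix.mul_nonsing_inv _ hd, mul_one]
    · intro A _
      show A * B⁻¹ * B = A
      rw [mul_assoc, Matrix.nonsing_inv_mul _ hd, mul_one]

lemma card_diag (E : Finset (Fin n → ZMod 2)) :
    ((E ×ˢ E).filter (fun p => p.1 = p.2)).card = E.card := by
  refine Finset.card_bij' (fun p _ => p.1) (fun u hu => (u, u)) ?_ ?_ ?_ ?_
  · intro p hp
    rw [mem_filter, Finset.mem_product] at hp
    exact hp.1.1
  · intro u hu
    rw [mem_filter, Finset.mem_product]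
    exact ⟨⟨hu, hu⟩, rfl⟩
  · intro p hp
    rw [mem_filter] at hp
    show (p.1, p.1) = p
    exact Prod.ext rfl hp.2
  · intro u _; rfl

lemma card_E_int : (((univ : Finset (Fin n → ZMod 2)).erase 0).card : ℤ) = (2:ℤ)^n - 1 := by
  rw [card_erase0, Nat.cast_sub Nat.one_le_two_pow]
  push_cast; ring

lemma card_P_int :
    ((P n).card : ℤ) = ((2:ℤ)^n - 1) * ((2:ℤ)^n - 2) := by
  set E := (univ : Finset (Fin n → ZMod 2)).erase 0 with hE
  have hsplit : ((E ×ˢ E).filter (fun p => p.1 = p.2)).card + (P n).card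
      = (E ×ˢ E).card := Finset.card_filter_add_card_filter_not _
  have hz : (((E ×ˢ E)).card : ℤ) = ((2:ℤ)^n - 1)^2 := by
    rw [Finset.card_product]
    push_cast
    rw [card_E_int (n := n)]
    ring
  have hd2 : ((((E ×ˢ E).filter (fun p => p.1 = p.2)).card) : ℤ) = (2:ℤ)^n - 1 := by
    rw [card_diag]; exact card_E_int
  have key : (((E ×ˢ E).filter (fun p => p.1 = p.2)).card : ℤ) + ((P n).card : ℤ)
      = (((E ×ˢ E)).card : ℤ) := by exact_mod_cast hsplit
  rw [hd2, hz] at key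
  linear_combination key

lemma sum_Q_univ (hn : 1 ≤ n) (q : (Fin n → ZMod 2) → ZMod 2) (hq : IsBalanced q) :
    ∑ u, (-1:ℤ)^(q u).val = 0 := by
  rw [sum_sign, hq]
  have h2 : (2:ℤ)^n = 2 * (2:ℤ)^(n-1) := by
    rw [← pow_succ']; congr 1; omega
  push_cast
  rw [h2]; ring

lemma sum_Q_erase (hn : 1 ≤ n) (q : (Fin n → ZMod 2) → ZMod 2) (hq : IsBalanced q) :
    ∑ u ∈ (univ : Finset (Fin n → ZMod 2)).erase 0, (-1:ℤ)^(q u).val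
      = -((-1:ℤ)^(q 0).val) := by
  have h := Finset.sum_erase_add univ (fun u => (-1:ℤ)^(q u).val) (mem_univ 0)
  rw [sum_Q_univ hn q hq] at h
  linarith

lemma sum_P_Q (hn : 3 ≤ n) (q : (Fin n → ZMod 2) → ZMod 2) (hq : IsBalanced q) :
    ∑ p ∈ P n, (-1:ℤ)^(q p.1).val * (-1:ℤ)^(q p.2).val = 2 - (2:ℤ)^n := by
  set Q : (Fin n → ZMod 2) → ℤ := fun u => (-1:ℤ)^(q u).val with hQ
  set E := (univ : Finset (Fin n → ZMod 2)).erase 0 with hE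
  have hsplit := Finset.sum_filter_add_sum_filter_not (E ×ˢ E) (fun p => p.1 = p.2)
    (fun p => Q p.1 * Q p.2)
  have hEE : ∑ p ∈ E ×ˢ E, Q p.1 * Q p.2 = 1 := by
    rw [Finset.sum_product, ← Finset.sum_mul_sum]
    rw [show ∑ u ∈ E, Q u = -Q 0 from sum_Q_erase (by omega) q hq]
    rw [neg_mul_neg]
    exact sign_sq _
  have hdsum : ∑ p ∈ (E ×ˢ E).filter (fun p => p.1 = p.2), Q p.1 * Q p.2
      = (((E ×ˢ E).filter (fun p => p.1 = p.2)).card : ℤ) := by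
    rw [Finset.sum_congr rfl (fun p hp => ?_), Finset.sum_const, nsmul_eq_mul, mul_one]
    rw [(Finset.mem_filter.mp hp).2]
    exact sign_sq _
  have hd2 : ((((E ×ˢ E).filter (fun p => p.1 = p.2)).card) : ℤ) = (2:ℤ)^n - 1 := by
    rw [card_diag]; exact card_E_int
  have hPsum : ∑ p ∈ P n, Q p.1 * Q p.2
      = ∑ p ∈ (E ×ˢ E).filter (fun p => ¬ p.1 = p.2), Q p.1 * Q p.2 := rfl
  rw [hPsum]
  rw [hdsum, hd2] at hsplit
  linarith [hEE, hsplit]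


open Matrix
variable {n : ℕ}


section Key
variable (hn : 3 ≤ n) (q : (Fin n → ZMod 2) → ZMod 2) (hq : IsBalanced q)

/-- The central orbit computation: `D·K(x,y)` is `D·|G|` on the diagonal and `(2-m)·|G|` off it. -/
lemma K_value (hn : 3 ≤ n) (q : (Fin n → ZMod 2) → ZMod 2) (hq : IsBalanced q)
    (x y : Fin n → ZMod 2) :
    ((2:ℤ)^n - 1) * ((2:ℤ)^n - 2)
        * ∑ A ∈ G n, (-1:ℤ)^(q (vecMul x A)).val * (-1:ℤ)^(q (vecMul y A)).val
      = if x = y then ((2:ℤ)^n - 1) * ((2:ℤ)^n - 2) * ((G n).card : ℤ)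
        else (2 - (2:ℤ)^n) * ((G n).card : ℤ) := by
  set m : ℤ := (2:ℤ)^n with hm
  set Q : (Fin n → ZMod 2) → ℤ := fun u => (-1:ℤ)^(q u).val with hQ
  by_cases hxy : x = y
  · subst hxy
    rw [if_pos rfl]
    rw [Finset.sum_congr rfl (fun A _ => sign_sq (q (vecMul x A))), Finset.sum_const,
      nsmul_eq_mul, mul_one]
  · rw [if_neg hxy]
    rcases eq_or_ne x 0 with rfl | hx0
    · -- x = 0, y ≠ 0
      have hy0 : y ≠ 0 := fun h => hxy (h ▸ rfl)
      have hL := L1 hn hy0 Q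
      rw [card_E_int, sum_Q_erase (by omega) q hq] at hL
      have hrw : ∑ A ∈ G n, Q (vecMul 0 A) * Q (vecMul y A)
          = Q 0 * ∑ A ∈ G n, Q (vecMul y A) := by
        rw [Finset.mul_sum]
        exact Finset.sum_congr rfl (fun A _ => by rw [Matrix.zero_vecMul])
      rw [hrw]
      have hsq := sign_sq (q 0)
      linear_combination ((m - 2) * Q 0) * hL + ((2 - m) * ((G n).card : ℤ)) * hsq
    · rcases eq_or_ne y 0 with rfl | hy0
      · -- y = 0, x ≠ 0
        have hL := L1 hn hx0 Q
        rw [card_E_int, sum_Q_erase (by omega) q hq] at hL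
        have hrw : ∑ A ∈ G n, Q (vecMul x A) * Q (vecMul 0 A)
            = (∑ A ∈ G n, Q (vecMul x A)) * Q 0 := by
          rw [Finset.sum_mul]
          exact Finset.sum_congr rfl (fun A _ => by rw [Matrix.zero_vecMul])
        rw [hrw]
        have hsq := sign_sq (q 0)
        linear_combination ((m - 2) * Q 0) * hL + ((2 - m) * ((G n).card : ℤ)) * hsq
      · -- both nonzero, distinct
        have hL := L2 hn hx0 hy0 hxy (fun p => Q p.1 * Q p.2)
        rw [card_P_int, sum_P_Q hn q hq] at hL
        rw [mul_comm ((G n).card : ℤ) (2 - (2:ℤ)^n)] at hL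
        exact hL

end Key


end Stmt19

open Stmt19 Matrix in
/-- Let `n ≥ 3` be odd, `ω = ⌊2^(n/2)⌋` with `ω ≡ 0 (mod 4)`, and `q` balanced. Then no
`f` with even weight is `3`-almost `q`-bent (here `2^(n/2)` is the real number `√(2^n)`). -/
theorem stmt_19 (n : ℕ) (hn3 : 3 ≤ n) (hnodd : Odd n)
    (q : (Fin n → ZMod 2) → ZMod 2) (hq : IsBalanced q)
    (ω : ℤ) (hω : ω = ⌊Real.sqrt (2 ^ n)⌋) (hω4 : ω % 4 = 0)
    (f : (Fin n → ZMod 2) → ZMod 2) (hf : Even (wt f)) :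
    ¬ (∀ A : Matrix (Fin n) (Fin n) (ZMod 2), (IsUnit A ∨ A = 0) →
        |(|Wq q f A| : ℝ) - Real.sqrt (2 ^ n)| ≤ 3) := by
  intro H
  set m : ℤ := (2:ℤ)^n with hm
  set Q : (Fin n → ZMod 2) → ℤ := fun u => (-1:ℤ)^(q u).val with hQ
  set Ef : (Fin n → ZMod 2) → ℤ := fun x => (-1:ℤ)^(f x).val with hEf
  set GC : ℤ := ((G n).card : ℤ) with hGC
  set D : ℤ := (m - 1) * (m - 2) with hD
  -- Step 1: all transform values are pinned to ω
  have hpin : ∀ A : Matrix (Fin n) (Fin n) (ZMod 2), (IsUnit A ∨ A = 0) → |Wq q f A| = ω :=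
    fun A hA => pin _ ω _ hω hω4 (dvd_four hn3 q f hq hf A hA) (H A hA)
  have hpinG : ∀ A ∈ G n, (Wq q f A)^2 = ω^2 := by
    intro A hA
    rw [← sq_abs (Wq q f A), hpin A (Or.inl (mem_G.mp hA))]
  have hpin0 : (Wq q f 0)^2 = ω^2 := by
    rw [← sq_abs (Wq q f 0), hpin 0 (Or.inr rfl)]
  -- Step 2: expansion of Wq on units
  have hW0 : Wq q f 0 = ∑ x, Ef x := by rw [Wq, if_pos rfl]
  have hWA : ∀ A ∈ G n, Wq q f A = ∑ x, Ef x * Q (vecMul x A) := by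
    intro A hA
    rw [Wq, if_neg (unit_ne_zero (by omega) (mem_G.mp hA))]
    exact Finset.sum_congr rfl (fun a _ => sign_add _ _)
  have hstep1 : ∀ A ∈ G n, (Wq q f A)^2
      = ∑ x, ∑ y, (Ef x * Ef y) * (Q (vecMul x A) * Q (vecMul y A)) := by
    intro A hA
    rw [hWA A hA, sq, Finset.sum_mul_sum]
    exact Finset.sum_congr rfl fun x _ => Finset.sum_congr rfl fun y _ => by ring
  -- Step 3: the double-counting identity
  have hmain : D * ∑ A ∈ G n, (Wq q f A)^2
      = ∑ x, ∑ y, (Ef x * Ef y) *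
          (if x = y then D * GC else (2 - m) * GC) := by
    rw [Finset.sum_congr rfl hstep1, Finset.sum_comm]
    rw [Finset.sum_congr rfl (fun x _ => Finset.sum_comm (s := G n))]
    rw [Finset.mul_sum]
    refine Finset.sum_congr rfl fun x _ => ?_
    rw [Finset.mul_sum]
    refine Finset.sum_congr rfl fun y _ => ?_
    have hk' : D * ∑ A ∈ G n, Q (vecMul x A) * Q (vecMul y A)
        = (if x = y then D * GC else (2 - m) * GC) := K_value hn3 q hq x y
    rw [← Finset.mul_sum]
    linear_combination (Ef x * Ef y) * hk'
  -- Step 4: evaluate the double sum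
  have hsplit : ∀ x y : Fin n → ZMod 2,
      (Ef x * Ef y) * (if x = y then D * GC else (2 - m) * GC)
        = (Ef x * Ef y) * ((2 - m) * GC)
          + (if x = y then (D * GC - (2 - m) * GC) else 0) := by
    intro x y
    by_cases h : x = y
    · subst h
      rw [if_pos rfl, if_pos rfl, sign_sq (f x)]
      ring
    · rw [if_neg h, if_neg h]
      ring
  have hcardu : ((univ : Finset (Fin n → ZMod 2)).card : ℤ) = m := by
    rw [Finset.card_univ, card_V]; push_cast; rfl
  have heval : ∑ x, ∑ y, (Ef x * Ef y) *
      (if x = y then D * GC else (2 - m) * GC)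
        = ((2 - m) * GC) * (∑ x, Ef x)^2 + m * (D * GC - (2 - m) * GC) := by
    rw [Finset.sum_congr rfl (fun x _ => Finset.sum_congr rfl (fun y _ => hsplit x y))]
    rw [Finset.sum_congr rfl (fun x _ => Finset.sum_add_distrib)]
    rw [Finset.sum_add_distrib]
    have h1 : ∑ x : Fin n → ZMod 2, ∑ y : Fin n → ZMod 2,
        (Ef x * Ef y) * ((2 - m) * GC) = ((2 - m) * GC) * (∑ x, Ef x)^2 := by
      rw [sq, Finset.sum_mul_sum]
      rw [Finset.mul_sum]
      refine Finset.sum_congr rfl fun x _ => ?_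
      rw [Finset.mul_sum]
      exact Finset.sum_congr rfl fun y _ => by ring
    have h2 : ∑ x : Fin n → ZMod 2, ∑ y : Fin n → ZMod 2,
        (if x = y then (D * GC - (2 - m) * GC) else 0) = m * (D * GC - (2 - m) * GC) := by
      rw [Finset.sum_congr rfl (fun x _ => Finset.sum_ite_eq univ x
        (fun _ => D * GC - (2 - m) * GC))]
      rw [Finset.sum_congr rfl (fun x _ => if_pos (mem_univ x))]
      rw [Finset.sum_const, nsmul_eq_mul, hcardu]
    rw [h1, h2]
  -- Step 5: substitute pinned values
  have hS2 : ∑ A ∈ G n, (Wq q f A)^2 = GC * ω^2 := by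
    rw [Finset.sum_congr rfl hpinG, Finset.sum_const, nsmul_eq_mul]
  have hWsq : (∑ x, Ef x)^2 = ω^2 := by rw [← hW0]; exact hpin0
  have hfinal := hmain.trans heval
  rw [hS2, hWsq] at hfinal
  -- Step 6: cancel to get ω² = 2ⁿ
  have hGCpos : 0 < GC := by rw [hGC]; exact_mod_cast G_card_pos
  have hm8 : (8:ℤ) ≤ m := by
    rw [hm]
    calc (8:ℤ) = 2^3 := by norm_num
    _ ≤ 2^n := pow_le_pow_right₀ (by norm_num) hn3
  have hcancel : ((m - 2) * m * GC) * ω^2 = ((m - 2) * m * GC) * m := by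
    rw [hD] at hfinal
    linear_combination hfinal
  have hne : ((m - 2) * m * GC) ≠ 0 :=
    mul_ne_zero (mul_ne_zero (by omega) (by omega)) (by omega)
  have hωsq : ω^2 = m := mul_left_cancel₀ hne hcancel
  -- Step 7: 2ⁿ is not a perfect square for odd n
  have hNat : (ω.natAbs)^2 = 2^n := by
    have := congrArg Int.natAbs hωsq
    rw [Int.natAbs_pow] at this
    rw [this, hm]
    simp [Int.natAbs_pow]
  have hdvd : ω.natAbs ∣ 2^n := by
    rw [← hNat]
    exact dvd_pow_self _ (by norm_num)
  obtain ⟨k, hk, hek⟩ := (Nat.dvd_prime_pow Nat.prime_two).mp hdvd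
  rw [hek, ← pow_mul] at hNat
  have h2k : k * 2 = n := Nat.pow_right_injective (le_refl 2) hNat
  obtain ⟨j, hj⟩ := hnodd
  omega
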